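/- Let n ≥ 1 and let w be a permutation of {1,…,n}. Then dis(w)/2 = ℓ(w) if and only if no reduced word for w contains three consecutive letters of the form i (i±1) i for some i ∈ {1,…,n−1}. -/

import Mathlib

namespace Stmt1

/-- The adjacent transposition `sᵢ = (i, i+1)`, acting on `ℤ`. -/
def s (i : ℕ) : Equiv.Perm ℤ := Equiv.swap (i : ℤ) ((i : ℤ) + 1)

/-- `w` is a permutation of `{1, …, n}` (fixing everything else). -/
def IsPermOn (n : ℕ) (w : Equiv.Perm ℤ) : Prop :=
  ∀ i : ℤ, i < 1 ∨ (n : ℤ) < i → w i = i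

/-- `l` is a word for `w` in the letters `{1, …, n-1}`. -/
def IsWord (n : ℕ) (w : Equiv.Perm ℤ) (l : List ℕ) : Prop :=
  (∀ i ∈ l, 1 ≤ i ∧ i + 1 ≤ n) ∧ (l.map s).prod = w

/-- The Coxeter length of `w`: the minimal length of a word for `w`. -/
noncomputable def len (n : ℕ) (w : Equiv.Perm ℤ) : ℕ :=
  sInf {m | ∃ l : List ℕ, IsWord n w l ∧ l.length = m}

/-- `l` is a reduced word for `w`. -/
def IsReducedWord (n : ℕ) (w : Equiv.Perm ℤ) (l : List ℕ) : Prop :=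
  IsWord n w l ∧ l.length = len n w

/-- The disarray `dis(w) = ∑_{i=1}^n |w(i) - i|`. -/
noncomputable def dis (n : ℕ) (w : Equiv.Perm ℤ) : ℤ :=
  ∑ i ∈ Finset.Icc (1 : ℤ) (n : ℤ), |w i - i|

/-- `l` contains three consecutive letters of the form `i (i±1) i`
for some `i ∈ {1, …, n-1}`. -/
def HasBadFactor (n : ℕ) (l : List ℕ) : Prop :=
  ∃ i j : ℕ, 1 ≤ i ∧ i + 1 ≤ n ∧ (j = i + 1 ∨ i = j + 1) ∧ [i, j, i] <:+: l


/-! ### Auxiliary development -/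

/-- The box of positions `{1, …, n}`. -/
noncomputable def box (n : ℕ) : Finset ℤ := Finset.Icc (1 : ℤ) (n : ℤ)

/-- The inversion set of `w`. -/
noncomputable def invSet (n : ℕ) (w : Equiv.Perm ℤ) : Finset (ℤ × ℤ) :=
  ((box n) ×ˢ (box n)).filter fun p => p.1 < p.2 ∧ w p.2 < w p.1

/-- The number of inversions of `w`. -/
noncomputable def N (n : ℕ) (w : Equiv.Perm ℤ) : ℕ := (invSet n w).card

/-- `w` contains the pattern 321. -/
def Has321 (n : ℕ) (w : Equiv.Perm ℤ) : Prop :=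
  ∃ a b c : ℤ, 1 ≤ a ∧ a < b ∧ b < c ∧ c ≤ (n : ℤ) ∧ w b < w a ∧ w c < w b

lemma permOn_one (n : ℕ) : IsPermOn n 1 := by intro i _; rfl

lemma permOn_mul {n : ℕ} {u v : Equiv.Perm ℤ} (hu : IsPermOn n u) (hv : IsPermOn n v) :
    IsPermOn n (u * v) := by
  intro i hi
  simp only [Equiv.Perm.mul_apply]
  rw [hv i hi, hu i hi]

lemma permOn_s {n i : ℕ} (h1 : 1 ≤ i) (h2 : i + 1 ≤ n) : IsPermOn n (s i) := by
  intro x hx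
  have hi1 : (1:ℤ) ≤ (i:ℤ) := by exact_mod_cast h1
  have hi2 : (i:ℤ) + 1 ≤ (n:ℤ) := by exact_mod_cast h2
  apply Equiv.swap_apply_of_ne_of_ne <;> omega

lemma permOn_inv {n : ℕ} {w : Equiv.Perm ℤ} (hw : IsPermOn n w) : IsPermOn n w⁻¹ := by
  intro i hi
  nth_rewrite 1 [← hw i hi]
  simp

lemma permOn_mem_box {n : ℕ} {w : Equiv.Perm ℤ} (hw : IsPermOn n w) {x : ℤ}
    (hx : x ∈ box n) : w x ∈ box n := by
  simp only [box, Finset.mem_Icc] at *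
  by_contra hc
  have := hw (w x) (by omega)
  have : w (w x) = w x := this
  have := w.injective this
  omega

lemma permOn_word {n : ℕ} {l : List ℕ} (hl : ∀ i ∈ l, 1 ≤ i ∧ i + 1 ≤ n) :
    IsPermOn n (l.map s).prod := by
  induction l with
  | nil => exact permOn_one n
  | cons a t ih =>
    simp only [List.map_cons, List.prod_cons]
    exact permOn_mul (permOn_s (hl a (by simp)).1 (hl a (by simp)).2)
      (ih fun i hi => hl i (by simp [hi]))

lemma mem_invSet {n : ℕ} {u : Equiv.Perm ℤ} {p : ℤ × ℤ} :
    p ∈ invSet n u ↔ p.1 ∈ box n ∧ p.2 ∈ box n ∧ p.1 < p.2 ∧ u p.2 < u p.1 := by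
  simp [invSet, Finset.mem_filter, Finset.mem_product, and_assoc]

lemma s_inv (i : ℕ) : (s i)⁻¹ = s i := by simp [s]

lemma s_apply (i : ℕ) (x : ℤ) :
    s i x = if x = (i:ℤ) then (i:ℤ)+1 else if x = (i:ℤ)+1 then (i:ℤ) else x := by
  rw [s]; exact Equiv.swap_apply_def _ _ _

lemma swap_compare {i x y : ℤ} (hxy : x ≠ y) :
    Equiv.swap i (i+1) y < Equiv.swap i (i+1) x ↔
      (if (x = i ∧ y = i+1) ∨ (x = i+1 ∧ y = i) then x < y else y < x) := by
  rw [Equiv.swap_apply_def, Equiv.swap_apply_def]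
  split_ifs <;> omega

lemma s_compare {i : ℕ} {x y : ℤ} (hxy : x ≠ y) :
    s i y < s i x ↔
      (if (x = (i:ℤ) ∧ y = (i:ℤ)+1) ∨ (x = (i:ℤ)+1 ∧ y = (i:ℤ)) then x < y else y < x) :=
  swap_compare hxy

lemma invSet_s_mul_of_lt {n i : ℕ} (h1 : 1 ≤ i) (h2 : i + 1 ≤ n) {v : Equiv.Perm ℤ}
    (hv : IsPermOn n v) (hab : v⁻¹ (i:ℤ) < v⁻¹ ((i:ℤ)+1)) :
    invSet n (s i * v) = insert (v⁻¹ (i:ℤ), v⁻¹ ((i:ℤ)+1)) (invSet n v) ∧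
      (v⁻¹ (i:ℤ), v⁻¹ ((i:ℤ)+1)) ∉ invSet n v := by
  set a := v⁻¹ (i:ℤ) with ha
  set b := v⁻¹ ((i:ℤ)+1) with hb
  have hva : v a = (i:ℤ) := Equiv.apply_symm_apply v _
  have hvb : v b = (i:ℤ)+1 := Equiv.apply_symm_apply v _
  have hibox : (i:ℤ) ∈ box n := by
    simp only [box, Finset.mem_Icc]; constructor <;> [exact_mod_cast h1; exact_mod_cast (by omega : i ≤ n)]
  have hi1box : (i:ℤ)+1 ∈ box n := by
    simp only [box, Finset.mem_Icc]
    constructor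
    · have : (1:ℤ) ≤ (i:ℤ) := by exact_mod_cast h1
      omega
    · exact_mod_cast h2
  have habox : a ∈ box n := permOn_mem_box (permOn_inv hv) hibox
  have hbbox : b ∈ box n := permOn_mem_box (permOn_inv hv) hi1box
  have key : ∀ x y : ℤ, x ∈ box n → y ∈ box n → x < y →
      ((s i * v) y < (s i * v) x ↔ (if x = a ∧ y = b then v x < v y else v y < v x)) := by
    intro x y hx hy hlt
    have hne : v x ≠ v y := fun h => absurd (v.injective h) (by omega)
    simp only [Equiv.Perm.mul_apply]
    rw [s_compare hne]
    have e1 : (v x = (i:ℤ)) ↔ x = a := by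
      constructor
      · intro h; rw [ha, ← h]; simp
      · intro h; rw [h, hva]
    have e2 : (v y = (i:ℤ)+1) ↔ y = b := by
      constructor
      · intro h; rw [hb, ← h]; simp
      · intro h; rw [h, hvb]
    have e3 : ¬ (v x = (i:ℤ)+1 ∧ v y = (i:ℤ)) := by
      rintro ⟨hx1, hy1⟩
      have : x = b := by rw [hb, ← hx1]; simp
      have : y = a := by rw [ha, ← hy1]; simp
      omega
    by_cases hc : x = a ∧ y = b
    · rw [if_pos (Or.inl ⟨e1.mpr hc.1, e2.mpr hc.2⟩), if_pos hc]
    · have : ¬ ((v x = (i:ℤ) ∧ v y = (i:ℤ)+1) ∨ (v x = (i:ℤ)+1 ∧ v y = (i:ℤ))) := by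
        rintro (⟨u1, u2⟩ | hcc)
        · exact hc ⟨e1.mp u1, e2.mp u2⟩
        · exact e3 hcc
      rw [if_neg this, if_neg hc]
  constructor
  · ext p
    obtain ⟨x, y⟩ := p
    simp only [mem_invSet, Finset.mem_insert, Prod.mk.injEq]
    constructor
    · rintro ⟨hx, hy, hlt, hs⟩
      rw [key x y hx hy hlt] at hs
      by_cases hc : x = a ∧ y = b
      · exact Or.inl hc
      · right
        rw [if_neg hc] at hs
        exact ⟨hx, hy, hlt, hs⟩
    · rintro (⟨hx, hy⟩ | ⟨hx, hy, hlt, hs⟩)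
      · subst hx; subst hy
        refine ⟨habox, hbbox, hab, ?_⟩
        rw [key a b habox hbbox hab, if_pos ⟨rfl, rfl⟩, hva, hvb]
        omega
      · refine ⟨hx, hy, hlt, ?_⟩
        rw [key x y hx hy hlt]
        by_cases hc : x = a ∧ y = b
        · obtain ⟨rfl, rfl⟩ := hc
          rw [hva, hvb] at hs; omega
        · rw [if_neg hc]; exact hs
  · rw [mem_invSet]
    rintro ⟨-, -, -, hs⟩
    rw [hva, hvb] at hs; omega

lemma invSet_s_mul_of_gt {n i : ℕ} (h1 : 1 ≤ i) (h2 : i + 1 ≤ n) {v : Equiv.Perm ℤ}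
    (hv : IsPermOn n v) (hab : v⁻¹ ((i:ℤ)+1) < v⁻¹ (i:ℤ)) :
    invSet n v = insert (v⁻¹ ((i:ℤ)+1), v⁻¹ (i:ℤ)) (invSet n (s i * v)) ∧
      (v⁻¹ ((i:ℤ)+1), v⁻¹ (i:ℤ)) ∉ invSet n (s i * v) := by
  have hv' : IsPermOn n (s i * v) := permOn_mul (permOn_s h1 h2) hv
  have hinv : ∀ m : ℤ, (s i * v)⁻¹ m = v⁻¹ (s i m) := by
    intro m; rw [mul_inv_rev, s_inv]; rfl
  have e1 : (s i * v)⁻¹ (i:ℤ) = v⁻¹ ((i:ℤ)+1) := by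
    rw [hinv, s_apply]; simp
  have e2 : (s i * v)⁻¹ ((i:ℤ)+1) = v⁻¹ (i:ℤ) := by
    rw [hinv, s_apply]
    have : (i:ℤ)+1 ≠ (i:ℤ) := by omega
    rw [if_neg this, if_pos rfl]
  have := invSet_s_mul_of_lt h1 h2 hv' (by rw [e1, e2]; exact hab)
  rw [e1, e2] at this
  have hss : s i * (s i * v) = v := by
    rw [← mul_assoc]
    simp [s, Equiv.swap_mul_self]
  rw [hss] at this
  exact this


lemma s_sq (i : ℕ) : s i * s i = 1 := by simp [s, Equiv.swap_mul_self]

lemma s_order_pres {d : ℕ} {x y : ℤ} (hxy : x < y) (hne : ¬(x = (d:ℤ) ∧ y = (d:ℤ)+1)) :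
    s d x < s d y := by
  simp only [s_apply]
  split_ifs <;> omega

lemma s_box {n d : ℕ} (h1 : 1 ≤ d) (h2 : d + 1 ≤ n) {x : ℤ} (hx : x ∈ box n) :
    s d x ∈ box n := permOn_mem_box (permOn_s h1 h2) hx

lemma s_apply_self (d : ℕ) : s d (d:ℤ) = (d:ℤ)+1 := by rw [s_apply]; simp

lemma s_apply_succ (d : ℕ) : s d ((d:ℤ)+1) = (d:ℤ) := by
  rw [s_apply]; split_ifs <;> omega

lemma s_apply_other (d : ℕ) {x : ℤ} (hx1 : x ≠ (d:ℤ)) (hx2 : x ≠ (d:ℤ)+1) : s d x = x := by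
  rw [s_apply]; split_ifs <;> omega

lemma N_mul_s_of_descent {n d : ℕ} (h1 : 1 ≤ d) (h2 : d + 1 ≤ n) {w : Equiv.Perm ℤ}
    (hw : IsPermOn n w) (hd : w ((d:ℤ)+1) < w (d:ℤ)) :
    N n w = N n (w * s d) + 1 := by
  have hd1 : (1:ℤ) ≤ (d:ℤ) := by exact_mod_cast h1
  have hd2 : (d:ℤ) + 1 ≤ (n:ℤ) := by exact_mod_cast h2
  have hmem : ((d:ℤ), (d:ℤ)+1) ∈ invSet n w := by
    rw [mem_invSet]
    refine ⟨?_, ?_, by omega, hd⟩ <;> simp [box, Finset.mem_Icc] <;> omega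
  have hsd : ∀ x : ℤ, s d (s d x) = x := by
    intro x
    have := congrArg (fun u => u x) (s_sq d)
    simpa using this
  have hcard : (invSet n (w * s d)).card = ((invSet n w).erase ((d:ℤ), (d:ℤ)+1)).card := by
    apply Finset.card_bij' (fun p _ => ((s d p.1, s d p.2) : ℤ × ℤ))
      (fun p _ => ((s d p.1, s d p.2) : ℤ × ℤ))
    · rintro ⟨x, y⟩ hp
      rw [mem_invSet] at hp
      obtain ⟨hx, hy, hlt, hvv⟩ := hp
      simp only [Equiv.Perm.mul_apply] at hvv
      have hnot : ¬(x = (d:ℤ) ∧ y = (d:ℤ)+1) := by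
        rintro ⟨rfl, rfl⟩
        rw [s_apply_self, s_apply_succ] at hvv
        omega
      have hord := s_order_pres hlt hnot
      rw [Finset.mem_erase]
      constructor
      · intro hcontra
        have e1 : s d x = (d:ℤ) := congrArg Prod.fst hcontra
        have e2 : s d y = (d:ℤ)+1 := congrArg Prod.snd hcontra
        have : x = s d (d:ℤ) := by rw [← e1, hsd]
        have hx' : x = (d:ℤ)+1 := by rw [this, s_apply]; simp
        have : y = s d ((d:ℤ)+1) := by rw [← e2, hsd]
        have hy' : y = (d:ℤ) := by
          rw [this, s_apply]
          split_ifs <;> omega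
        omega
      · rw [mem_invSet]
        exact ⟨s_box h1 h2 hx, s_box h1 h2 hy, hord, hvv⟩
    · rintro ⟨x, y⟩ hp
      rw [Finset.mem_erase, mem_invSet] at hp
      obtain ⟨hne, hx, hy, hlt, hvv⟩ := hp
      have hnot : ¬(x = (d:ℤ) ∧ y = (d:ℤ)+1) := by
        rintro ⟨rfl, rfl⟩
        exact hne rfl
      have hord := s_order_pres hlt hnot
      rw [mem_invSet]
      refine ⟨s_box h1 h2 hx, s_box h1 h2 hy, hord, ?_⟩
      simp only [Equiv.Perm.mul_apply, hsd]
      exact hvv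
    · rintro ⟨x, y⟩ _
      simp [hsd]
    · rintro ⟨x, y⟩ _
      simp [hsd]
  have := Finset.card_erase_of_mem hmem
  unfold N
  rw [hcard, this]
  have : 0 < (invSet n w).card := Finset.card_pos.mpr ⟨_, hmem⟩
  omega

lemma N_le_word_length {n : ℕ} {w : Equiv.Perm ℤ} {l : List ℕ} (h : IsWord n w l) :
    N n w ≤ l.length := by
  obtain ⟨hl, hprod⟩ := h
  induction l generalizing w with
  | nil =>
    simp only [List.map_nil, List.prod_nil] at hprod
    subst hprod
    have : invSet n 1 = ∅ := by
      apply Finset.filter_eq_empty_iff.mpr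
      rintro ⟨x, y⟩ -
      simp only [Equiv.Perm.one_apply]
      omega
    simp [N, this]
  | cons a t ih =>
    simp only [List.map_cons, List.prod_cons] at hprod
    set v := (t.map s).prod with hv
    have hvperm : IsPermOn n v := permOn_word fun i hi => hl i (by simp [hi])
    have hIH : N n v ≤ t.length := ih (fun i hi => hl i (by simp [hi])) rfl
    have ha1 : 1 ≤ a := (hl a (by simp)).1
    have ha2 : a + 1 ≤ n := (hl a (by simp)).2
    subst hprod
    rcases lt_trichotomy (v⁻¹ (a:ℤ)) (v⁻¹ ((a:ℤ)+1)) with hc | hc | hc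
    · obtain ⟨heq, hnot⟩ := invSet_s_mul_of_lt ha1 ha2 hvperm hc
      have : N n (s a * v) = N n v + 1 := by
        unfold N
        rw [heq, Finset.card_insert_of_notMem hnot]
      simp only [List.length_cons]
      omega
    · exfalso
      have := v⁻¹.injective hc
      omega
    · obtain ⟨heq, hnot⟩ := invSet_s_mul_of_gt ha1 ha2 hvperm hc
      have : N n v = N n (s a * v) + 1 := by
        unfold N
        rw [heq, Finset.card_insert_of_notMem hnot]
      simp only [List.length_cons]
      omega

lemma chain_mono {w : Equiv.Perm ℤ} {x y : ℤ} (hxy : x ≤ y)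
    (h : ∀ d, x ≤ d → d < y → w d < w (d+1)) : w x ≤ w y := by
  refine Int.le_induction (motive := fun z _ => (∀ d, x ≤ d → d < z → w d < w (d+1)) → w x ≤ w z)
    ?_ ?_ y hxy h
  · intro _; exact le_refl _
  · intro z hz ih hh
    have h1 : w x ≤ w z := ih fun d hd hd' => hh d hd (by omega)
    have h2 : w z < w (z+1) := hh z hz (by omega)
    omega

lemma exists_descent {n : ℕ} {w : Equiv.Perm ℤ} (hw : IsPermOn n w) (hN : 0 < N n w) :
    ∃ d : ℕ, 1 ≤ d ∧ d + 1 ≤ n ∧ w ((d:ℤ)+1) < w (d:ℤ) := by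
  obtain ⟨⟨x, y⟩, hp⟩ := Finset.card_pos.mp hN
  rw [mem_invSet] at hp
  obtain ⟨hx, hy, hlt, hvv⟩ := hp
  simp only [box, Finset.mem_Icc] at hx hy
  by_contra hcon
  push_neg at hcon
  have : ∀ d : ℤ, x ≤ d → d < y → w d < w (d+1) := by
    intro d hd hd'
    have h1d : (1:ℤ) ≤ d := by omega
    have h2d : d + 1 ≤ (n:ℤ) := by omega
    have := hcon d.toNat (by omega) (by omega)
    have hcast : ((d.toNat : ℕ) : ℤ) = d := by omega
    rw [hcast] at this
    have hne : w d ≠ w (d+1) := fun h => by have := w.injective h; omega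
    omega
  have := chain_mono (le_of_lt hlt) this
  omega

lemma ge_of_mono {n : ℕ} {w : Equiv.Perm ℤ} (hw : IsPermOn n w)
    (hmono : ∀ x y : ℤ, x ∈ box n → y ∈ box n → x < y → w x < w y) :
    ∀ x : ℤ, x ∈ box n → x ≤ w x := by
  have key : ∀ x : ℤ, 1 ≤ x → x ≤ (n:ℤ) → x ≤ w x := by
    intro x hx1
    refine Int.le_induction (motive := fun z _ => z ≤ (n:ℤ) → z ≤ w z) ?_ ?_ x hx1
    · intro hle
      have h1b : (1:ℤ) ∈ box n := by simp only [box, Finset.mem_Icc]; omega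
      have : w 1 ∈ box n := permOn_mem_box hw h1b
      simp only [box, Finset.mem_Icc] at this
      omega
    · intro y hy ih hle
      have hyb : y ∈ box n := by simp only [box, Finset.mem_Icc]; omega
      have hy1b : y + 1 ∈ box n := by simp only [box, Finset.mem_Icc]; omega
      have h1 := hmono y (y+1) hyb hy1b (by omega)
      have h2 := ih (by omega)
      omega
  intro x hx
  simp only [box, Finset.mem_Icc] at hx
  exact key x hx.1 hx.2

lemma exists_word_N {n : ℕ} (w : Equiv.Perm ℤ) (hw : IsPermOn n w) :
    ∃ l : List ℕ, IsWord n w l ∧ l.length = N n w := by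
  generalize hm : N n w = m
  induction m generalizing w with
  | zero =>
    refine ⟨[], ⟨by simp, ?_⟩, by simp⟩
    simp only [List.map_nil, List.prod_nil]
    -- w has no inversions ⇒ w = 1
    ext x
    by_cases hx : x ∈ box n
    case neg =>
      simp only [box, Finset.mem_Icc] at hx
      rw [hw x (by omega)]
      rfl
    case pos =>
      have hmono : ∀ x y : ℤ, x ∈ box n → y ∈ box n → x < y → w x < w y := by
        intro x y hx hy hlt
        by_contra hc
        have hne : w x ≠ w y := fun h => by have := w.injective h; omega
        have : (x, y) ∈ invSet n w := mem_invSet.mpr ⟨hx, hy, hlt, show w y < w x by omega⟩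
        have : 0 < N n w := Finset.card_pos.mpr ⟨_, this⟩
        omega
      have hmono' : ∀ x y : ℤ, x ∈ box n → y ∈ box n → x < y → w⁻¹ x < w⁻¹ y := by
        intro x y hx hy hlt
        have hwx := permOn_mem_box (permOn_inv hw) hx
        have hwy := permOn_mem_box (permOn_inv hw) hy
        have hne : w⁻¹ x ≠ w⁻¹ y := fun h => by have := w⁻¹.injective h; omega
        by_contra hc
        have := hmono (w⁻¹ y) (w⁻¹ x) hwy hwx (by omega)
        simp at this
        omega
      have h1 := ge_of_mono hw hmono x hx
      have h2 := ge_of_mono (permOn_inv hw) hmono' (w x) (permOn_mem_box hw hx)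
      rw [show w⁻¹ (w x) = x from Equiv.symm_apply_apply w x] at h2
      have : w x = x := le_antisymm h2 h1
      simp [this]
  | succ m ih =>
    obtain ⟨d, hd1, hd2, hdesc⟩ := exists_descent hw (by omega)
    have hw' : IsPermOn n (w * s d) := permOn_mul hw (permOn_s hd1 hd2)
    have hN' : N n (w * s d) = m := by
      have := N_mul_s_of_descent hd1 hd2 hw hdesc
      omega
    obtain ⟨l', ⟨hl'1, hl'2⟩, hl'len⟩ := ih (w * s d) hw' hN'
    refine ⟨l' ++ [d], ⟨?_, ?_⟩, ?_⟩
    · intro i hi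
      rcases List.mem_append.mp hi with h | h
      · exact hl'1 i h
      · simp at h; subst h; exact ⟨hd1, hd2⟩
    · rw [List.map_append, List.prod_append, hl'2]
      simp only [List.map_cons, List.map_nil, List.prod_cons, List.prod_nil, mul_one,
        mul_assoc, s_sq]
    · simp only [List.length_append, List.length_cons, List.length_nil, hl'len, hN', hm]

lemma len_eq_N {n : ℕ} (w : Equiv.Perm ℤ) (hw : IsPermOn n w) : len n w = N n w := by
  obtain ⟨l, hword, hlen⟩ := exists_word_N w hw
  apply le_antisymm
  · exact Nat.sInf_le ⟨l, hword, hlen⟩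
  · have hne : {m | ∃ l : List ℕ, IsWord n w l ∧ l.length = m}.Nonempty :=
      ⟨l.length, l, hword, rfl⟩
    apply le_csInf hne
    rintro m ⟨l', hword', rfl⟩
    exact N_le_word_length hword'


lemma reduced_step {n a : ℕ} (ha1 : 1 ≤ a) (ha2 : a + 1 ≤ n) {v : Equiv.Perm ℤ}
    (hv : IsPermOn n v) (hred : N n (s a * v) = N n v + 1) :
    v⁻¹ (a:ℤ) < v⁻¹ ((a:ℤ)+1) ∧
      (v⁻¹ (a:ℤ), v⁻¹ ((a:ℤ)+1)) ∈ invSet n (s a * v) := by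
  rcases lt_trichotomy (v⁻¹ (a:ℤ)) (v⁻¹ ((a:ℤ)+1)) with hc | hc | hc
  · obtain ⟨heq, _⟩ := invSet_s_mul_of_lt ha1 ha2 hv hc
    exact ⟨hc, by rw [heq]; exact Finset.mem_insert_self _ _⟩
  · exfalso; have := v⁻¹.injective hc; omega
  · exfalso
    obtain ⟨heq, hnot⟩ := invSet_s_mul_of_gt ha1 ha2 hv hc
    have : N n v = N n (s a * v) + 1 := by
      unfold N; rw [heq, Finset.card_insert_of_notMem hnot]
    omega

lemma reduced_chain {n : ℕ} {u v : List ℕ} (hl : ∀ i ∈ u ++ v, 1 ≤ i ∧ i + 1 ≤ n)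
    (hred : N n ((u ++ v).map s).prod = (u ++ v).length) :
    N n ((v.map s).prod) = v.length ∧
      invSet n (v.map s).prod ⊆ invSet n ((u ++ v).map s).prod := by
  induction u with
  | nil =>
    simp only [List.nil_append] at hred ⊢
    exact ⟨hred, Finset.Subset.refl _⟩
  | cons a u' ih =>
    have hl' : ∀ i ∈ u' ++ v, 1 ≤ i ∧ i + 1 ≤ n := fun i hi => hl i (by simp at hi ⊢; tauto)
    have ha1 : 1 ≤ a := (hl a (by simp)).1
    have ha2 : a + 1 ≤ n := (hl a (by simp)).2
    set v' := ((u' ++ v).map s).prod with hv'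
    have hv'perm : IsPermOn n v' := permOn_word hl'
    have hprod : (((a :: u') ++ v).map s).prod = s a * v' := by
      simp [hv']
    have hlen : ((a :: u') ++ v).length = (u' ++ v).length + 1 := by simp
    rw [hprod, hlen] at hred
    have hle : N n v' ≤ (u' ++ v).length := N_le_word_length ⟨hl', rfl⟩
    -- must be the lt case
    rcases lt_trichotomy (v'⁻¹ (a:ℤ)) (v'⁻¹ ((a:ℤ)+1)) with hc | hc | hc
    · obtain ⟨heq, hnot⟩ := invSet_s_mul_of_lt ha1 ha2 hv'perm hc
      have hNstep : N n (s a * v') = N n v' + 1 := by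
        unfold N; rw [heq, Finset.card_insert_of_notMem hnot]
      have hred' : N n v' = (u' ++ v).length := by omega
      obtain ⟨h1, h2⟩ := ih hl' hred'
      refine ⟨h1, ?_⟩
      rw [hprod, heq]
      exact h2.trans (Finset.subset_insert _ _)
    · exfalso; have := v'⁻¹.injective hc; omega
    · exfalso
      obtain ⟨heq, hnot⟩ := invSet_s_mul_of_gt ha1 ha2 hv'perm hc
      have : N n v' = N n (s a * v') + 1 := by
        unfold N; rw [heq, Finset.card_insert_of_notMem hnot]
      omega

lemma has321_of_badFactor {n : ℕ} {w : Equiv.Perm ℤ} (hw : IsPermOn n w) {l : List ℕ}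
    (hred : IsReducedWord n w l) (hbad : HasBadFactor n l) : Has321 n w := by
  obtain ⟨⟨hletters, hprod⟩, hlen⟩ := hred
  obtain ⟨i, j, hi1, hi2, hij, u, v, hluv⟩ := hbad
  have hl2 : l = u ++ (i :: j :: i :: v) := by rw [← hluv]; simp
  subst hl2
  have hNw : N n w = (u ++ (i :: j :: i :: v)).length := by
    rw [hlen, len_eq_N w hw]
  have hj1 : 1 ≤ j := (hletters j (by simp)).1
  have hj2 : j + 1 ≤ n := (hletters j (by simp)).2
  have hred' : N n ((u ++ (i :: j :: i :: v)).map s).prod = (u ++ (i :: j :: i :: v)).length := by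
    rw [hprod]; exact hNw
  have assoc2 : u ++ (i :: j :: i :: v) = (u ++ [i]) ++ (j :: i :: v) := by simp
  have assoc3 : u ++ (i :: j :: i :: v) = (u ++ [i, j]) ++ (i :: v) := by simp
  have assoc4 : u ++ (i :: j :: i :: v) = (u ++ [i, j, i]) ++ v := by simp
  have c1 := reduced_chain hletters hred'
  have c2 := reduced_chain (u := u ++ [i]) (v := j :: i :: v)
    (by rw [← assoc2]; exact hletters) (by rw [← assoc2]; exact hred')
  have c3 := reduced_chain (u := u ++ [i, j]) (v := i :: v)
    (by rw [← assoc3]; exact hletters) (by rw [← assoc3]; exact hred')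
  have c4 := reduced_chain (u := u ++ [i, j, i]) (v := v)
    (by rw [← assoc4]; exact hletters) (by rw [← assoc4]; exact hred')
  rw [← assoc2] at c2
  rw [← assoc3] at c3
  rw [← assoc4] at c4
  rw [hprod] at c1 c2 c3 c4
  -- abbreviations
  have hVperm : IsPermOn n (v.map s).prod := permOn_word fun x hx => hletters x (by simp [hx])
  have hV2perm : IsPermOn n (s j * (s i * (v.map s).prod)) := by
    have := permOn_word (l := j :: i :: v) fun x hx => hletters x (by simp at hx ⊢; tauto)
    simpa [mul_assoc] using this
  have hN0 : N n (v.map s).prod = v.length := c4.1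
  have hN1 : N n (s i * (v.map s).prod) = v.length + 1 := by
    have := c3.1; simpa using this
  have hN2 : N n (s j * (s i * (v.map s).prod)) = v.length + 2 := by
    have := c2.1
    simp only [List.map_cons, List.prod_cons, List.length_cons, mul_assoc] at this
    omega
  have hN3 : N n (s i * (s j * (s i * (v.map s).prod))) = v.length + 3 := by
    have := c1.1
    simp only [List.map_cons, List.prod_cons, List.length_cons, mul_assoc] at this
    omega
  have stepA := reduced_step hi1 hi2 hVperm (by rw [hN1, hN0])
  have stepC := reduced_step hi1 hi2 hV2perm (by rw [hN3, hN2])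
  have hsubA : invSet n (s i * (v.map s).prod) ⊆ invSet n w := by
    have := c3.2
    simpa using this
  have hsubC : invSet n (s i * (s j * (s i * (v.map s).prod))) ⊆ invSet n w := by
    have := c1.2
    simpa [mul_assoc] using this
  have memA := hsubA stepA.2
  have memC := hsubC stepC.2
  set V := (v.map s).prod with hV
  have hV2inv : ∀ x : ℤ, (s j * (s i * V))⁻¹ x = V⁻¹ (s i (s j x)) := by
    intro x
    rw [mul_inv_rev, mul_inv_rev, s_inv, s_inv]
    rfl
  rcases hij with hij | hij
  · -- j = i + 1
    have hcast : (j:ℤ) = (i:ℤ) + 1 := by exact_mod_cast congrArg (Nat.cast : ℕ → ℤ) hij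
    set p := V⁻¹ (i:ℤ) with hp
    set q := V⁻¹ ((i:ℤ)+1) with hq
    set r := V⁻¹ ((i:ℤ)+2) with hr
    have eC1 : (s j * (s i * V))⁻¹ (i:ℤ) = q := by
      rw [hV2inv, s_apply_other j (by omega) (by omega), s_apply_self]
    have eC2 : (s j * (s i * V))⁻¹ ((i:ℤ)+1) = r := by
      rw [hV2inv]
      rw [show ((i:ℤ)+1) = (j:ℤ) by omega, s_apply_self j]
      rw [s_apply_other i (by omega) (by omega), hr]
      congr 1
      omega
    rw [eC1, eC2] at memC stepC
    rw [mem_invSet] at memA memC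
    refine ⟨p, q, r, ?_, stepA.1, stepC.1, ?_, ?_, ?_⟩
    · have := memA.1; simp only [box, Finset.mem_Icc] at this; exact this.1
    · have := memC.2.1; simp only [box, Finset.mem_Icc] at this; exact this.2
    · exact memA.2.2.2
    · exact memC.2.2.2
  · -- i = j + 1
    have hcast : (i:ℤ) = (j:ℤ) + 1 := by exact_mod_cast congrArg (Nat.cast : ℕ → ℤ) hij
    set p := V⁻¹ (j:ℤ) with hp
    set q := V⁻¹ ((j:ℤ)+1) with hq
    set r := V⁻¹ ((j:ℤ)+2) with hr
    have eA1 : V⁻¹ (i:ℤ) = q := by rw [hcast]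
    have eA2 : V⁻¹ ((i:ℤ)+1) = r := by
      rw [hr]; congr 1; omega
    have eC1 : (s j * (s i * V))⁻¹ (i:ℤ) = p := by
      rw [hV2inv]
      rw [show (i:ℤ) = (j:ℤ)+1 from hcast, s_apply_succ j]
      rw [s_apply_other i (by omega) (by omega)]
    have eC2 : (s j * (s i * V))⁻¹ ((i:ℤ)+1) = q := by
      rw [hV2inv]
      rw [show ((i:ℤ)+1) = (j:ℤ)+2 by omega]
      rw [s_apply_other j (by omega) (by omega)]
      rw [show ((j:ℤ)+2) = (i:ℤ)+1 by omega, s_apply_succ i, hcast]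
    rw [eA1, eA2] at memA stepA
    rw [eC1, eC2] at memC stepC
    rw [mem_invSet] at memA memC
    refine ⟨p, q, r, ?_, stepC.1, stepA.1, ?_, ?_, ?_⟩
    · have := memC.1; simp only [box, Finset.mem_Icc] at this; exact this.1
    · have := memA.2.1; simp only [box, Finset.mem_Icc] at this; exact this.2
    · exact memC.2.2.2
    · exact memA.2.2.2


noncomputable def cI (n : ℕ) (w : Equiv.Perm ℤ) (i : ℤ) : ℕ :=
  ((box n).filter fun j => i < j ∧ w j < w i).card

noncomputable def bI (n : ℕ) (w : Equiv.Perm ℤ) (i : ℤ) : ℕ :=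
  ((box n).filter fun j => j < i ∧ w j < w i).card

lemma mem_box {n : ℕ} {x : ℤ} : x ∈ box n ↔ 1 ≤ x ∧ x ≤ (n:ℤ) := by
  simp [box, Finset.mem_Icc]

lemma count_lt {n : ℕ} {w : Equiv.Perm ℤ} (hw : IsPermOn n w) {i : ℤ} (hi : i ∈ box n) :
    ((box n).filter fun j => w j < w i).card = (w i - 1).toNat := by
  have hwi : w i ∈ box n := permOn_mem_box hw hi
  rw [mem_box] at hwi
  have : (w i - 1).toNat = (Finset.Icc (1:ℤ) (w i - 1)).card := by
    rw [Int.card_Icc]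
    congr 1
    omega
  rw [this]
  apply Finset.card_bij' (fun j _ => w j) (fun k _ => w⁻¹ k)
  · intro j hj
    simp only [Finset.mem_filter] at hj
    have := permOn_mem_box hw hj.1
    rw [mem_box] at this
    rw [Finset.mem_Icc]
    omega
  · intro k hk
    rw [Finset.mem_Icc] at hk
    have hkbox : k ∈ box n := by rw [mem_box]; omega
    have h1 : w⁻¹ k ∈ box n := permOn_mem_box (permOn_inv hw) hkbox
    simp only [Finset.mem_filter]
    refine ⟨h1, ?_⟩
    rw [show w (w⁻¹ k) = k from Equiv.apply_symm_apply w k]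
    omega
  · intro j _; simp
  · intro k _; simp

lemma bc_sum {n : ℕ} {w : Equiv.Perm ℤ} (hw : IsPermOn n w) {i : ℤ} (hi : i ∈ box n) :
    (bI n w i : ℤ) + (cI n w i : ℤ) = w i - 1 := by
  have hwi : w i ∈ box n := permOn_mem_box hw hi
  rw [mem_box] at hwi
  have hsplit : ((box n).filter fun j => w j < w i) =
      ((box n).filter fun j => j < i ∧ w j < w i) ∪
        ((box n).filter fun j => i < j ∧ w j < w i) := by
    rw [← Finset.filter_or]
    apply Finset.filter_congr
    intro j _
    constructor
    · intro h
      have hne : j ≠ i := fun he => by rw [he] at h; omega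
      rcases lt_or_gt_of_ne hne with hlt | hgt
      · exact Or.inl ⟨hlt, h⟩
      · exact Or.inr ⟨hgt, h⟩
    · rintro (⟨_, h⟩ | ⟨_, h⟩) <;> exact h
  have hdisj : Disjoint ((box n).filter fun j => j < i ∧ w j < w i)
      ((box n).filter fun j => i < j ∧ w j < w i) := by
    apply Finset.disjoint_filter_filter'
    rw [disjoint_iff_inf_le]
    intro j hj
    simp only [Pi.inf_apply, inf_Prop_eq] at hj
    exact absurd hj (by push_neg; intro h1; omega)
  have := count_lt hw hi
  rw [hsplit, Finset.card_union_of_disjoint hdisj] at this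
  unfold bI cI
  omega

lemma bI_le {n : ℕ} (w : Equiv.Perm ℤ) {i : ℤ} (hi : 1 ≤ i) :
    (bI n w i : ℤ) ≤ i - 1 := by
  have hsub : ((box n).filter fun j => j < i ∧ w j < w i) ⊆ Finset.Icc (1:ℤ) (i - 1) := by
    intro j hj
    simp only [Finset.mem_filter, mem_box] at hj
    rw [Finset.mem_Icc]
    omega
  have := Finset.card_le_card hsub
  rw [Int.card_Icc] at this
  unfold bI
  omega

lemma cI_ge {n : ℕ} {w : Equiv.Perm ℤ} (hw : IsPermOn n w) {i : ℤ} (hi : i ∈ box n) :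
    max (w i - i) 0 ≤ (cI n w i : ℤ) := by
  have h1 := bc_sum hw hi
  have h2 := bI_le (n := n) w (mem_box.mp hi).1
  have : (0:ℤ) ≤ (cI n w i : ℤ) := Int.natCast_nonneg _
  omega

lemma N_eq_sum {n : ℕ} (w : Equiv.Perm ℤ) :
    (N n w : ℤ) = ∑ i ∈ box n, (cI n w i : ℤ) := by
  have h1 : N n w = ∑ i ∈ box n, cI n w i := by
    unfold N
    rw [Finset.card_eq_sum_card_fiberwise (f := Prod.fst) (t := box n)
      (fun p hp => (mem_invSet.mp hp).1)]
    apply Finset.sum_congr rfl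
    intro i hibox
    refine Finset.card_bij' (fun p _ => p.2) (fun j _ => (i, j)) ?hi ?hj ?left ?right
    case hi =>
      rintro ⟨x, y⟩ hp
      simp only [Finset.mem_filter] at hp
      obtain ⟨hmem, hfst⟩ := hp
      rw [mem_invSet] at hmem
      have hfst' : x = i := hfst
      subst hfst'
      simp only [Finset.mem_filter]
      exact ⟨hmem.2.1, hmem.2.2.1, hmem.2.2.2⟩
    case hj =>
      intro j hj
      simp only [Finset.mem_filter] at hj
      exact Finset.mem_filter.mpr ⟨mem_invSet.mpr ⟨hibox, hj.1, hj.2.1, hj.2.2⟩, rfl⟩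
    case left =>
      rintro ⟨x, y⟩ hp
      simp only [Finset.mem_filter] at hp
      have : x = i := hp.2
      simp [this]
    case right =>
      intro j _
      rfl
  rw [h1]
  push_cast
  rfl

lemma sum_box_apply {n : ℕ} {w : Equiv.Perm ℤ} (hw : IsPermOn n w) :
    ∑ i ∈ box n, w i = ∑ i ∈ box n, i := by
  apply Finset.sum_bij' (fun i _ => w i) (fun i _ => w⁻¹ i)
  · intro i hi; exact permOn_mem_box hw hi
  · intro i hi; exact permOn_mem_box (permOn_inv hw) hi
  · intro i _; simp
  · intro i _; simp
  · intro i _; rfl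

lemma dis_eq_twice_E {n : ℕ} {w : Equiv.Perm ℤ} (hw : IsPermOn n w) :
    dis n w = 2 * ∑ i ∈ box n, max (w i - i) 0 := by
  unfold dis
  have : ∀ i : ℤ, |w i - i| = 2 * max (w i - i) 0 - (w i - i) := by
    intro i
    rcases le_or_gt (w i - i) 0 with h | h
    · rw [abs_of_nonpos h, max_eq_right h]; ring
    · rw [abs_of_pos h, max_eq_left (le_of_lt h)]; ring
  calc ∑ i ∈ Finset.Icc (1:ℤ) (n:ℤ), |w i - i|
      = ∑ i ∈ box n, (2 * max (w i - i) 0 - (w i - i)) := by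
        apply Finset.sum_congr rfl
        intro i _
        exact this i
    _ = 2 * (∑ i ∈ box n, max (w i - i) 0) - (∑ i ∈ box n, w i - ∑ i ∈ box n, i) := by
        rw [Finset.sum_sub_distrib, Finset.mul_sum, Finset.sum_sub_distrib]
    _ = 2 * ∑ i ∈ box n, max (w i - i) 0 := by
        rw [sum_box_apply hw]
        ring

lemma exists_le_not_lt {n : ℕ} {w : Equiv.Perm ℤ} (hw : IsPermOn n w)
    {i : ℤ} (hi : i ∈ box n) (hb : (bI n w i : ℤ) ≤ i - 2) :
    ∃ j, 1 ≤ j ∧ j < i ∧ w i < w j := by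
  by_contra hcon
  push_neg at hcon
  have hsub : Finset.Icc (1:ℤ) (i - 1) ⊆ ((box n).filter fun j => j < i ∧ w j < w i) := by
    intro j hj
    rw [Finset.mem_Icc] at hj
    have hjbox : j ∈ box n := by
      rw [mem_box]
      have := (mem_box.mp hi).2
      omega
    have hwlt := hcon j hj.1 (by omega)
    have hne : w j ≠ w i := fun he => by
      have := w.injective he; omega
    simp only [Finset.mem_filter]
    refine ⟨hjbox, by omega, by omega⟩
  have := Finset.card_le_card hsub
  rw [Int.card_Icc] at this
  unfold bI at hb
  have := (mem_box.mp hi).1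
  omega

lemma cI_le_of_no321 {n : ℕ} {w : Equiv.Perm ℤ} (hw : IsPermOn n w) (h : ¬ Has321 n w)
    {i : ℤ} (hi : i ∈ box n) : (cI n w i : ℤ) ≤ max (w i - i) 0 := by
  by_contra hc
  push_neg at hc
  have hsum := bc_sum hw hi
  have hipos := (mem_box.mp hi).1
  have hcpos : 0 < cI n w i := by omega
  obtain ⟨r, hr⟩ := Finset.card_pos.mp hcpos
  simp only [Finset.mem_filter, mem_box] at hr
  have hbi : (bI n w i : ℤ) ≤ i - 2 := by
    by_contra hb
    push_neg at hb
    have hble := bI_le (n := n) w hipos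
    have hbeq : (bI n w i : ℤ) = i - 1 := by omega
    omega
  obtain ⟨j, hj1, hji, hwj⟩ := exists_le_not_lt hw hi hbi
  exact h ⟨j, i, r, hj1, hji, hr.2.1, hr.1.2, hwj, hr.2.2⟩

lemma dis_eq_of_not_has321' {n : ℕ} {w : Equiv.Perm ℤ} (hw : IsPermOn n w)
    (h : ¬ Has321 n w) : dis n w = 2 * (N n w : ℤ) := by
  rw [dis_eq_twice_E hw, N_eq_sum]
  congr 1
  apply Finset.sum_congr rfl
  intro i hi
  exact le_antisymm (cI_ge hw hi) (cI_le_of_no321 hw h hi)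

lemma dis_lt_of_has321' {n : ℕ} {w : Equiv.Perm ℤ} (hw : IsPermOn n w)
    (h : Has321 n w) : dis n w < 2 * (N n w : ℤ) := by
  obtain ⟨a, b, c, ha1, hab, hbc, hcn, hwab, hwbc⟩ := h
  have hbbox : b ∈ box n := by rw [mem_box]; omega
  have hcbox : c ∈ box n := by rw [mem_box]; omega
  have habox : a ∈ box n := by rw [mem_box]; omega
  -- strict inequality at b
  have hstrict : max (w b - b) 0 + 1 ≤ (cI n w b : ℤ) := by
    have hcpos : 0 < cI n w b := by
      apply Finset.card_pos.mpr
      exact ⟨c, by simp only [Finset.mem_filter]; exact ⟨hcbox, hbc, hwbc⟩⟩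
    have hsum := bc_sum hw hbbox
    have hbb : (bI n w b : ℤ) ≤ b - 2 := by
      have hsub : ((box n).filter fun j => j < b ∧ w j < w b) ⊆
          (Finset.Icc (1:ℤ) (b - 1)).erase a := by
        intro j hj
        simp only [Finset.mem_filter, mem_box] at hj
        rw [Finset.mem_erase, Finset.mem_Icc]
        refine ⟨fun he => ?_, by omega, by omega⟩
        subst he
        omega
      have := Finset.card_le_card hsub
      rw [Finset.card_erase_of_mem (by rw [Finset.mem_Icc]; omega), Int.card_Icc] at this
      unfold bI
      omega
    omega
  rw [dis_eq_twice_E hw, N_eq_sum]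
  have hsumlt : ∑ i ∈ box n, max (w i - i) 0 < ∑ i ∈ box n, (cI n w i : ℤ) := by
    apply Finset.sum_lt_sum
    · intro i hi; exact cI_ge hw hi
    · exact ⟨b, hbbox, by omega⟩
  omega


lemma mul_s_apply_of_ne {d : ℕ} (w : Equiv.Perm ℤ) {x : ℤ} (h1 : x ≠ (d:ℤ))
    (h2 : x ≠ (d:ℤ)+1) : (w * s d) x = w x := by
  rw [Equiv.Perm.mul_apply, s_apply_other d h1 h2]

lemma mul_s_apply_left (w : Equiv.Perm ℤ) (d : ℕ) : (w * s d) (d:ℤ) = w ((d:ℤ)+1) := by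
  rw [Equiv.Perm.mul_apply, s_apply_self]

lemma mul_s_apply_right (w : Equiv.Perm ℤ) (d : ℕ) : (w * s d) ((d:ℤ)+1) = w (d:ℤ) := by
  rw [Equiv.Perm.mul_apply, s_apply_succ]

lemma exists_badword {n : ℕ} : ∀ m : ℕ, ∀ w : Equiv.Perm ℤ, IsPermOn n w → N n w = m →
    Has321 n w → ∃ l, IsWord n w l ∧ l.length = N n w ∧ HasBadFactor n l := by
  intro m
  induction m using Nat.strong_induction_on with
  | _ m ih =>
  intro w hw hm hp
  obtain ⟨a, b, c, ha1, hab, hbc, hcn, hwab, hwbc⟩ := hp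
  -- the recursion helper
  have recurse : ∀ dn : ℕ, 1 ≤ dn → dn + 1 ≤ n → w ((dn:ℤ)+1) < w (dn:ℤ) →
      Has321 n (w * s dn) →
      ∃ l, IsWord n w l ∧ l.length = N n w ∧ HasBadFactor n l := by
    intro dn hd1 hd2 hdesc hp'
    have hw' : IsPermOn n (w * s dn) := permOn_mul hw (permOn_s hd1 hd2)
    have hstep := N_mul_s_of_descent hd1 hd2 hw hdesc
    obtain ⟨l', ⟨hl1, hl2⟩, hlen, hbad⟩ :=
      ih (N n (w * s dn)) (by omega) (w * s dn) hw' rfl hp'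
    refine ⟨l' ++ [dn], ⟨?_, ?_⟩, ?_, ?_⟩
    · intro x hx
      rcases List.mem_append.mp hx with h | h
      · exact hl1 x h
      · simp at h; subst h; exact ⟨hd1, hd2⟩
    · rw [List.map_append, List.prod_append, hl2]
      simp only [List.map_cons, List.map_nil, List.prod_cons, List.prod_nil, mul_one,
        mul_assoc, s_sq]
    · simp only [List.length_append, List.length_cons, List.length_nil, hlen]
      omega
    · obtain ⟨i, j, hi1, hi2, hij, u, v, huv⟩ := hbad
      exact ⟨i, j, hi1, hi2, hij, u, v ++ [dn], by rw [← huv]; simp⟩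
  by_cases hcb : c = b + 1
  · by_cases hba : b = a + 1
    · -- base case : consecutive positions a, a+1, a+2
      subst hba
      subst hcb
      set an := a.toNat with han
      have hca : (an:ℤ) = a := Int.toNat_of_nonneg (by omega)
      have han1 : 1 ≤ an := by omega
      have han2 : an + 1 ≤ n := by omega
      have han2' : (an + 1) + 1 ≤ n := by omega
      have han1' : 1 ≤ an + 1 := by omega
      have hcast1 : ((an + 1 : ℕ) : ℤ) = a + 1 := by push_cast; omega
      -- step 1 : descent at a
      have hd1 : w ((an:ℤ)+1) < w (an:ℤ) := by rw [hca]; exact hwab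
      have hs1 := N_mul_s_of_descent han1 han2 hw hd1
      set w1 := w * s an with hw1def
      have hw1 : IsPermOn n w1 := permOn_mul hw (permOn_s han1 han2)
      -- step 2 : descent at a + 1 for w1
      have hd2 : w1 (((an+1:ℕ):ℤ)+1) < w1 ((an+1:ℕ):ℤ) := by
        rw [hcast1]
        have e1 : w1 (a + 1 + 1) = w (a + 1 + 1) := by
          rw [hw1def]
          exact mul_s_apply_of_ne w (by omega) (by omega)
        have e2 : w1 (a + 1) = w a := by
          rw [hw1def]
          have := mul_s_apply_right w an
          rw [hca] at this
          exact this
        rw [e1, e2]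
        omega
      have hs2 := N_mul_s_of_descent han1' han2' hw1 hd2
      set w2 := w1 * s (an+1) with hw2def
      have hw2 : IsPermOn n w2 := permOn_mul hw1 (permOn_s han1' han2')
      -- step 3 : descent at a for w2
      have hd3 : w2 ((an:ℤ)+1) < w2 (an:ℤ) := by
        have e1 : w2 (a+1) = w (a+1+1) := by
          rw [hw2def]
          have h1 : (w1 * s (an+1)) (a+1) = w1 (a+1+1) := by
            have := mul_s_apply_left w1 (an+1)
            rw [hcast1] at this
            exact this
          rw [h1, hw1def, mul_s_apply_of_ne w (by omega) (by omega)]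
        have e2 : w2 (a:ℤ) = w (a+1) := by
          rw [hw2def]
          have h1 : (w1 * s (an+1)) a = w1 a := by
            apply mul_s_apply_of_ne w1 (by rw [hcast1]; omega) (by rw [hcast1]; omega)
          rw [h1, hw1def]
          have := mul_s_apply_left w an
          rw [hca] at this
          exact this
        rw [hca, e1, e2]
        omega
      have hs3 := N_mul_s_of_descent han1 han2 hw2 hd3
      set w3 := w2 * s an with hw3def
      have hw3 : IsPermOn n w3 := permOn_mul hw2 (permOn_s han1 han2)
      obtain ⟨l3, ⟨hl31, hl32⟩, hl3len⟩ := exists_word_N w3 hw3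
      have scancel : ∀ (i : ℕ) (x : Equiv.Perm ℤ), s i * (s i * x) = x := by
        intro i x
        rw [← mul_assoc, s_sq, one_mul]
      refine ⟨l3 ++ [an, an+1, an], ⟨?_, ?_⟩, ?_, ?_⟩
      · intro x hx
        rcases List.mem_append.mp hx with h | h
        · exact hl31 x h
        · simp at h
          rcases h with h | h | h <;> subst h <;> omega
      · rw [List.map_append, List.prod_append, hl32, hw3def, hw2def, hw1def]
        simp only [List.map_cons, List.map_nil, List.prod_cons, List.prod_nil, mul_one,
          mul_assoc, s_sq, scancel]
      · simp only [List.length_append, List.length_cons, List.length_nil, hl3len]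
        omega
      · exact ⟨an, an+1, han1, by omega, Or.inl rfl, l3, [], by simp⟩
    · -- c = b + 1, b > a + 1 : find a descent in [a, b-1]
      by_cases hdesc : ∃ dn : ℕ, a + 1 ≤ (dn:ℤ) ∧ (dn:ℤ) ≤ b - 1 ∧ w ((dn:ℤ)+1) < w (dn:ℤ)
      · obtain ⟨dn, hdn1, hdn2, hdn3⟩ := hdesc
        have h1 : 1 ≤ dn := by omega
        have h2 : dn + 1 ≤ n := by
          have : (dn:ℤ) + 1 ≤ (n:ℤ) := by omega
          omega
        apply recurse dn h1 h2 hdn3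
        by_cases hde : (dn:ℤ) + 1 = b
        · -- pattern (a, dn, c)
          refine ⟨a, (dn:ℤ), c, ha1, by omega, by omega, hcn, ?_, ?_⟩
          · rw [mul_s_apply_left, mul_s_apply_of_ne (x := a) w (by omega) (by omega), hde]
            exact hwab
          · rw [mul_s_apply_left, mul_s_apply_of_ne (x := c) w (by omega) (by omega), hde]
            exact hwbc
        · -- pattern (a, b, c)
          refine ⟨a, b, c, ha1, hab, hbc, hcn, ?_, ?_⟩
          · rw [mul_s_apply_of_ne (x := b) w (by omega) (by omega),
              mul_s_apply_of_ne (x := a) w (by omega) (by omega)]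
            exact hwab
          · rw [mul_s_apply_of_ne (x := c) w (by omega) (by omega),
              mul_s_apply_of_ne (x := b) w (by omega) (by omega)]
            exact hwbc
      · -- no descent : w increasing on [a+1, b-1]; descent at a
        push_neg at hdesc
        have hincr : ∀ d : ℤ, a + 1 ≤ d → d < b → w d < w (d+1) := by
          intro d hd hd'
          have hd0 : (d.toNat : ℤ) = d := Int.toNat_of_nonneg (by omega)
          have := hdesc d.toNat (by omega) (by omega)
          rw [hd0] at this
          have hne : w d ≠ w (d+1) := fun h => by have := w.injective h; omega
          omega
        have hmono : w (a+1) ≤ w b := chain_mono (by omega) (fun d hd hd' => hincr d hd hd')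
        have hdesca : w (a + 1) < w a := by omega
        set an := a.toNat with han
        have hca : (an:ℤ) = a := Int.toNat_of_nonneg (by omega)
        have han1 : 1 ≤ an := by omega
        have han2 : an + 1 ≤ n := by omega
        apply recurse an han1 han2 (by rw [hca]; exact hdesca)
        -- pattern (a+1, b, c)
        refine ⟨a+1, b, c, by omega, by omega, hbc, hcn, ?_, ?_⟩
        · have e1 : (w * s an) (a+1) = w a := by
            have := mul_s_apply_right w an
            rw [hca] at this
            exact this
          have e2 : (w * s an) b = w b :=
            mul_s_apply_of_ne w (by omega) (by omega)
          rw [e1, e2]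
          exact hwab
        · rw [mul_s_apply_of_ne w (by omega) (by omega),
            mul_s_apply_of_ne w (by omega) (by omega)]
          exact hwbc
  · -- c > b + 1 : find a descent in [b, c-1]
    by_cases hdesc : ∃ dn : ℕ, b + 1 ≤ (dn:ℤ) ∧ (dn:ℤ) ≤ c - 1 ∧ w ((dn:ℤ)+1) < w (dn:ℤ)
    · obtain ⟨dn, hdn1, hdn2, hdn3⟩ := hdesc
      have h1 : 1 ≤ dn := by omega
      have h2 : dn + 1 ≤ n := by
        have : (dn:ℤ) + 1 ≤ (n:ℤ) := by omega
        omega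
      apply recurse dn h1 h2 hdn3
      by_cases hde : (dn:ℤ) + 1 = c
      · -- pattern (a, b, dn)
        refine ⟨a, b, (dn:ℤ), ha1, hab, by omega, by omega, ?_, ?_⟩
        · rw [mul_s_apply_of_ne (x := b) w (by omega) (by omega),
            mul_s_apply_of_ne (x := a) w (by omega) (by omega)]
          exact hwab
        · rw [mul_s_apply_left, mul_s_apply_of_ne (x := b) w (by omega) (by omega), hde]
          exact hwbc
      · -- pattern (a, b, c)
        refine ⟨a, b, c, ha1, hab, hbc, hcn, ?_, ?_⟩
        · rw [mul_s_apply_of_ne (x := b) w (by omega) (by omega),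
            mul_s_apply_of_ne (x := a) w (by omega) (by omega)]
          exact hwab
        · rw [mul_s_apply_of_ne (x := c) w (by omega) (by omega),
            mul_s_apply_of_ne (x := b) w (by omega) (by omega)]
          exact hwbc
    · -- no descent in [b+1, c-1]; descent at b
      push_neg at hdesc
      have hincr : ∀ d : ℤ, b + 1 ≤ d → d < c → w d < w (d+1) := by
        intro d hd hd'
        have hd0 : (d.toNat : ℤ) = d := Int.toNat_of_nonneg (by omega)
        have := hdesc d.toNat (by omega) (by omega)
        rw [hd0] at this
        have hne : w d ≠ w (d+1) := fun h => by have := w.injective h; omega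
        omega
      have hmono : w (b+1) ≤ w c := chain_mono (by omega) (fun d hd hd' => hincr d hd hd')
      have hdescb : w (b + 1) < w b := by omega
      set bn := b.toNat with hbn
      have hcb' : (bn:ℤ) = b := Int.toNat_of_nonneg (by omega)
      have hbn1 : 1 ≤ bn := by omega
      have hbn2 : bn + 1 ≤ n := by omega
      apply recurse bn hbn1 hbn2 (by rw [hcb']; exact hdescb)
      -- pattern (a, b+1, c)
      refine ⟨a, b+1, c, ha1, by omega, by omega, hcn, ?_, ?_⟩
      · have e1 : (w * s bn) (b+1) = w b := by
          have := mul_s_apply_right w bn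
          rw [hcb'] at this
          exact this
        have e2 : (w * s bn) a = w a :=
          mul_s_apply_of_ne w (by omega) (by omega)
        rw [e1, e2]
        exact hwab
      · have e1 : (w * s bn) (b+1) = w b := by
          have := mul_s_apply_right w bn
          rw [hcb'] at this
          exact this
        have e2 : (w * s bn) c = w c :=
          mul_s_apply_of_ne w (by omega) (by omega)
        rw [e1, e2]
        exact hwbc


theorem stmt_1 (n : ℕ) (hn : 1 ≤ n) (w : Equiv.Perm ℤ) (hw : IsPermOn n w) :
    dis n w = 2 * (len n w : ℤ) ↔
      ∀ l : List ℕ, IsReducedWord n w l → ¬ HasBadFactor n l := by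
  rw [len_eq_N w hw]
  constructor
  · intro hdis l hl hbad
    have h321 := has321_of_badFactor hw hl hbad
    have := dis_lt_of_has321' hw h321
    omega
  · intro hl
    by_cases h321 : Has321 n w
    · obtain ⟨l, hword, hlen, hbad⟩ := exists_badword (N n w) w hw rfl h321
      exact absurd hbad (hl l ⟨hword, by rw [hlen, len_eq_N w hw]⟩)
    · exact dis_eq_of_not_has321' hw h321

end Stmt1
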